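/- Let I ⊆ ℝ be an interval, let η ∈ (0,1), and let f : I → ℝ be Hölder continuous of exponent η, i.e. there is a constant K with |f(x) − f(y)| ≤ K|x − y|^η for all x, y ∈ I. Suppose there exists a set A ⊆ I, closed in I, such that f is locally constant at every point x ∈ I \ A, and suppose the Hausdorff dimension of A is strictly less than η. Then f is constant on I. -/

import Mathlib

open Filter Set
open scoped Classical

noncomputable section

/-- The Gauss map `G(x) = 1/x - ⌊1/x⌋` for `x ≠ 0`, `G(0) = 0`. -/
def gaussMap (x : ℝ) : ℝ := if x = 0 then 0 else 1 / x - ⌊1 / x⌋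

/-- The value of the finite continued fraction `[0; a₁, …, aₙ]`. -/
def cfVal : List ℕ+ → ℝ
  | [] => 0
  | a :: l => 1 / ((a : ℝ) + cfVal l)

/-- The value of the infinite continued fraction `[0; a₁, a₂, …]`
(the limit of the convergents). -/
def cfValInf (a : ℕ → ℕ+) : ℝ :=
  limUnder atTop (fun n => cfVal (List.ofFn fun i : Fin n => a i))

/-- The purely periodic sequence repeating the string `S`. -/
def perSeq (S : List ℕ+) : ℕ → ℕ+ := fun n => S.getD (n % S.length) 1

/-- `[0; overline{S}]`. -/
def cfPer (S : List ℕ+) : ℝ := cfValInf (perSeq S)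

/-- The eventually periodic sequence starting with `T` and then repeating `S`. -/
def preperSeq (T S : List ℕ+) : ℕ → ℕ+ :=
  fun n => if n < T.length then T.getD n 1 else S.getD ((n - T.length) % S.length) 1

/-- The continued fraction expansion of `r` of even length (when it exists). -/
def evenExp (r : ℝ) : List ℕ+ :=
  if h : ∃ S : List ℕ+, S ≠ [] ∧ Even S.length ∧ cfVal S = r then h.choose else []

/-- The continued fraction expansion of `r` of odd length (when it exists). -/
def oddExp (r : ℝ) : List ℕ+ :=
  if h : ∃ S : List ℕ+, S ≠ [] ∧ Odd S.length ∧ cfVal S = r then h.choose else []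

/-- The golden ratio `g = (√5 - 1)/2`. -/
def gGolden : ℝ := (Real.sqrt 5 - 1) / 2

/-- The quadratic interval `I_r = ([0; overline{S₁}], [0; overline{S₀}])`. -/
def quadInt (r : ℝ) : Set ℝ := Set.Ioo (cfPer (oddExp r)) (cfPer (evenExp r))

/-- The bifurcation (exceptional) set `E = [0,g] \ ⋃_{r ∈ ℚ ∩ (0,1)} I_r`. -/
def ESet : Set ℝ :=
  Set.Icc 0 gGolden \
    ⋃ r ∈ {x : ℝ | x ∈ Set.Ioo (0 : ℝ) 1 ∧ ∃ q : ℚ, (q : ℝ) = x}, quadInt r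

/-- `Q_E`: the set of rationals `r ∈ (0,1)` whose quadratic interval `I_r` is maximal,
i.e. is a connected component of `[0,g] \ E`. -/
def QE : Set ℝ :=
  {r | r ∈ Set.Ioo (0 : ℝ) 1 ∧ (∃ q : ℚ, (q : ℝ) = r) ∧
    ∃ x ∈ quadInt r, connectedComponentIn (Set.Icc 0 gGolden \ ESet) x = quadInt r}

/-- `ω(r) = [0; S₁ overline{S₀}]`. -/
def omegaPt (r : ℝ) : ℝ := cfValInf (preperSeq (oddExp r) (evenExp r))

/-- The tuning window `W_r = [ω(r), α₀)`. -/
def Wwin (r : ℝ) : Set ℝ := Set.Ico (omegaPt r) (cfPer (evenExp r))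

/-- The `(n+1)`-st continued fraction digit of `x`: `a_{n+1} = ⌊1/G^n(x)⌋`. -/
def cfDigit (x : ℝ) (n : ℕ) : ℕ+ := (⌊1 / (gaussMap^[n] x)⌋).toNat.toPNat'

/-- Concatenation of the first `n` blocks of a sequence of strings. -/
def blocksCat (B : ℕ → List ℕ+) : ℕ → List ℕ+
  | 0 => []
  | n + 1 => blocksCat B n ++ B n

/-- The infinite string obtained by concatenating all the blocks `B 0, B 1, …`
(each block assumed nonempty). -/
def flattenBlocks (B : ℕ → List ℕ+) : ℕ → ℕ+ :=
  fun n => (blocksCat B (n + 1)).getD n 1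

/-- Tuning substitution on a single digit: `a ↦ S₁ S₀^{a-1}`. -/
def tuneDigit (r : ℝ) (a : ℕ+) : List ℕ+ :=
  oddExp r ++ (List.replicate ((a : ℕ) - 1) (evenExp r)).flatten

/-- Tuning substitution on finite strings:
`(a₁, …, aₙ) ↦ S₁ S₀^{a₁-1} S₁ S₀^{a₂-1} ⋯ S₁ S₀^{aₙ-1}`. -/
def tuneList (r : ℝ) (A : List ℕ+) : List ℕ+ := (A.map (tuneDigit r)).flatten

/-- The tuning map `τ_r : [0,1] → [0,r]`:  `τ_r(0) = ω(r)`,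
`τ_r([0; a₁, a₂, …]) = [0; S₁ S₀^{a₁-1} S₁ S₀^{a₂-1} …]`, the same substitution
being applied to a finite expansion when the argument is rational. -/
def tune (r : ℝ) (x : ℝ) : ℝ :=
  if x = 0 then omegaPt r
  else if ∃ q : ℚ, (q : ℝ) = x then cfVal (tuneList r (evenExp x))
  else cfValInf (flattenBlocks (fun k => tuneDigit r (cfDigit x k)))

/-- The matching index `⟦A⟧ = a₁ - a₂ + a₃ - ⋯` of a finite string. -/
def mIdx : List ℕ+ → ℤ
  | [] => 0
  | a :: l => (a : ℤ) - mIdx l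

/-- The matching index of a rational number: `⟦r⟧ = ⟦S₀(r)⟧`. -/
def mIdxR (r : ℝ) : ℤ := mIdx (evenExp r)

/-- `B(t) = {x ∈ [0,1] : G^k(x) ≥ t for all k}`. -/
def BSet (t : ℝ) : Set ℝ := {x ∈ Set.Icc (0 : ℝ) 1 | ∀ k : ℕ, gaussMap^[k] x ≥ t}

/-- The regular Cantor set `K(Σ)`: numbers whose continued fraction expansion is an
infinite concatenation of strings from `Σ`. -/
def KSet (SS : Set (List ℕ+)) : Set ℝ :=
  {x | ∃ B : ℕ → List ℕ+, (∀ n, B n ∈ SS) ∧ (∀ n, B n ≠ []) ∧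
    x = cfValInf (flattenBlocks B)}

/-- The set of untuned parameters `UT = [0,g] \ ⋃_{r ∈ Q_E} W_r`. -/
def UTset : Set ℝ := Set.Icc 0 gGolden \ ⋃ r ∈ QE, Wwin r

/-- The set `Q_UT` of untuned rationals. -/
def QUT : Set ℝ := {r ∈ QE | ¬ ∃ s ∈ QE, ∃ p ∈ QE, r = tune s p}

/-- The order `S << T` on finite strings of positive integers. -/
def strLL (S T : List ℕ+) : Prop :=
  ∃ k, k < S.length ∧ k < T.length ∧ (∀ i < k, S.getD i 1 = T.getD i 1) ∧
    (if k % 2 = 1 then S.getD k 1 < T.getD k 1 else T.getD k 1 < S.getD k 1)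

/-- A finite string is dominant if it has even length and is `<<`-smaller than
all of its proper suffixes. -/
def Dominant (S : List ℕ+) : Prop :=
  Even S.length ∧ ∀ A B : List ℕ+, A ≠ [] → B ≠ [] → S = A ++ B → strLL S B

/-- The α-continued fraction transformation `T_α`. -/
def Talpha (α : ℝ) (x : ℝ) : ℝ :=
  if x = 0 then 0 else 1 / |x| - ⌊1 / |x| + 1 - α⌋

end

/-- A Hölder continuous function of exponent `η` on an interval `I`, locally
constant off a set `A` closed in `I` with `dimH A < η`, is constant on `I`. -/
theorem holder_locally_constant_off_small_set (I : Set ℝ) (hI : I.OrdConnected)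
    (η : ℝ) (hη : η ∈ Set.Ioo (0 : ℝ) 1) (f : ℝ → ℝ) (K : ℝ)
    (hf : ∀ x ∈ I, ∀ y ∈ I, |f x - f y| ≤ K * |x - y| ^ η)
    (A : Set ℝ) (hA : A ⊆ I) (hAclosed : closure A ∩ I ⊆ A)
    (hlc : ∀ x ∈ I \ A, ∃ U ∈ nhdsWithin x I, ∀ y ∈ U, f y = f x)
    (hdim : dimH A < ENNReal.ofReal η) :
    ∀ x ∈ I, ∀ y ∈ I, f x = f y := by
  -- Set up the Hölder data with nonnegative constant.
  have hη0 : (0:ℝ) < η := hη.1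
  set η₀ : NNReal := ⟨η, hη0.le⟩ with hη₀
  have hη₀pos : 0 < η₀ := by exact_mod_cast hη0
  set C : NNReal := K.toNNReal with hC
  have hHolder : HolderOnWith C η₀ f I := by
    intro x hx y hy
    rw [edist_dist, edist_dist, Real.dist_eq, Real.dist_eq]
    have h1 : |f x - f y| ≤ (C : ℝ) * |x - y| ^ η := by
      refine (hf x hx y hy).trans ?_
      exact mul_le_mul_of_nonneg_right (Real.le_coe_toNNReal K)
        (Real.rpow_nonneg (abs_nonneg _) η)
    calc ENNReal.ofReal |f x - f y| ≤ ENNReal.ofReal ((C : ℝ) * |x - y| ^ η) :=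
          ENNReal.ofReal_le_ofReal h1
      _ = ENNReal.ofReal (C : ℝ) * ENNReal.ofReal (|x - y| ^ η) :=
          ENNReal.ofReal_mul C.coe_nonneg
      _ = (C : ENNReal) * ENNReal.ofReal |x - y| ^ (η₀ : ℝ) := by
          rw [ENNReal.ofReal_coe_nnreal,
            ← ENNReal.ofReal_rpow_of_nonneg (abs_nonneg _) hη0.le]
          rfl
  -- f is continuous on I
  have hcont : ContinuousOn f I := hHolder.continuousOn hη₀pos
  -- the image of A has Lebesgue measure zero
  have hdimIm : dimH (f '' A) < (1 : NNReal) := by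
    have h1 : dimH (f '' A) ≤ dimH A / η₀ :=
      (hHolder.mono hA).dimH_image_le hη₀pos
    have h2 : dimH A < ((η₀ : NNReal) : ENNReal) := by
      refine lt_of_lt_of_le hdim (le_of_eq ?_)
      rw [ENNReal.ofReal]
      congr 1
      ext
      simp [hη₀, Real.toNNReal_of_nonneg hη0.le]
      rfl
    refine lt_of_le_of_lt h1 ?_
    rw [ENNReal.div_lt_iff (Or.inl (by exact_mod_cast hη₀pos.ne')) (Or.inl (by simp))]
    simpa using h2
  have hvolA : MeasureTheory.volume (f '' A) = 0 := by
    have := hausdorffMeasure_of_dimH_lt hdimIm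
    rwa [NNReal.coe_one, MeasureTheory.hausdorffMeasure_real] at this
  -- the image of I \ A is countable
  have hcnt : ∃ T : Set ℝ, T.Countable ∧ f '' (I \ A) ⊆ ⋃ x ∈ T, {f x} := by
    have hU : ∀ x ∈ I \ A, ∃ U ∈ nhdsWithin x (I \ A), ∀ y ∈ U, f y = f x := by
      intro x hx
      obtain ⟨U, hU, hUf⟩ := hlc x hx
      exact ⟨U, nhdsWithin_mono x diff_subset hU, hUf⟩
    classical
    choose! U hUmem hUf using hU
    obtain ⟨t, hts, htc, htU⟩ :=
      TopologicalSpace.countable_cover_nhdsWithin (f := U) (s := I \ A) hUmem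
    refine ⟨t, htc, ?_⟩
    rintro _ ⟨z, hz, rfl⟩
    obtain ⟨x, hx, hzx⟩ := by simpa using htU hz
    exact Set.mem_biUnion hx (by simp [hUf x (hts hx) z hzx])
  obtain ⟨T, hTc, hTsub⟩ := hcnt
  have hvolIm : MeasureTheory.volume (f '' A ∪ f '' (I \ A)) = 0 := by
    rw [MeasureTheory.measure_union_null_iff]
    constructor
    · exact hvolA
    · exact MeasureTheory.measure_mono_null hTsub
        ((hTc.biUnion fun x _ => Set.countable_singleton (f x)).measure_zero _)
  -- main argument
  intro x hx y hy
  have hIcc : Set.uIcc x y ⊆ I := hI.uIcc_subset hx hy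
  have hIVT : Set.uIcc (f x) (f y) ⊆ f '' Set.uIcc x y :=
    intermediate_value_uIcc (hcont.mono hIcc)
  have himage : f '' Set.uIcc x y ⊆ f '' A ∪ f '' (I \ A) := by
    rintro _ ⟨z, hz, rfl⟩
    by_cases hzA : z ∈ A
    · exact Or.inl ⟨z, hzA, rfl⟩
    · exact Or.inr ⟨z, ⟨hIcc hz, hzA⟩, rfl⟩
  have hvol : MeasureTheory.volume (Set.uIcc (f x) (f y)) = 0 :=
    MeasureTheory.measure_mono_null (hIVT.trans himage) hvolIm
  rw [Set.uIcc, Real.volume_Icc, ENNReal.ofReal_eq_zero, sub_nonpos] at hvol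
  exact le_antisymm ((le_max_left _ _).trans (hvol.trans (min_le_right _ _)))
    ((le_max_right _ _).trans (hvol.trans (min_le_left _ _)))
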